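/- arXiv:1802.03960 — 4 statements merged into one kernel-verified Lean document; each statement's English description precedes it below -/
import Mathlib

section
/- For all real x in [0,1] and all real y ≥ 0, we have 1 - (1-x)^y ≥ x·y·(1 - x·y). -/
lemma exp_neg_le_quad (u : ℝ) (hu : 0 ≤ u) : Real.exp (-u) ≤ 1 - u + u ^ 2 := by
  have hE := Real.add_one_le_exp u
  have hpos := Real.exp_pos u
  rw [Real.exp_neg]
  rw [inv_le_iff_one_le_mul₀ hpos]
  nlinarith [sq_nonneg u, sq_nonneg (1 - u)]

theorem stmt1 (x y : ℝ) (hx : x ∈ Set.Icc (0:ℝ) 1) (hy : 0 ≤ y) :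
    1 - (1 - x) ^ y ≥ x * y * (1 - x * y) := by
  obtain ⟨hx0, hx1⟩ := hx
  rcases eq_or_lt_of_le hx1 with h1 | h1
  · -- x = 1
    subst h1
    rcases eq_or_lt_of_le hy with h0 | h0
    · subst h0
      simp
    · rw [sub_self, Real.zero_rpow (ne_of_gt h0)]
      nlinarith [sq_nonneg (1 - y)]
  · -- x < 1, so 1 - x > 0
    have hpos : (0:ℝ) < 1 - x := by linarith
    have hlog : Real.log (1 - x) ≤ -x := by
      have := Real.log_le_sub_one_of_pos hpos
      linarith
    have h1 : (1 - x) ^ y = Real.exp (y * Real.log (1 - x)) := by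
      rw [← Real.exp_log hpos, ← Real.exp_mul, Real.exp_log hpos, mul_comm]
    have h2 : (1 - x) ^ y ≤ Real.exp (-(x * y)) := by
      rw [h1]
      apply Real.exp_le_exp.2
      nlinarith
    have h3 := exp_neg_le_quad (x * y) (mul_nonneg hx0 hy)
    nlinarith
end

section
/- Let (X_i)_{i=1}^k and (Y_i)_{i=1}^k be random variables such that the family (X_1,...,X_k) is independent of the family (Y_1,...,Y_k), and all Y_i have the same distribution. Then for every real x, P(max_{1≤i≤k} (X_i + Y_i) ≤ x) ≤ P(max_{1≤i≤k} (X_i + Y_1) ≤ x). Equivalently, max_i (X_i + Y_1) is stochastically dominated by max_i (X_i + Y_i). -/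
open MeasureTheory ProbabilityTheory

theorem stmt5 {Ω : Type*} [MeasurableSpace Ω] (μ : Measure Ω) [IsProbabilityMeasure μ]
    (k : ℕ) (hk : 0 < k) (X Y : Fin k → Ω → ℝ)
    (hX : ∀ i, Measurable (X i)) (hY : ∀ i, Measurable (Y i))
    (hindep : IndepFun (fun ω i => X i ω) (fun ω i => Y i ω) μ)
    (hid : ∀ i, Measure.map (Y i) μ = Measure.map (Y ⟨0, hk⟩) μ)
    (x : ℝ) :
    μ {ω | ∀ i, X i ω + Y i ω ≤ x} ≤ μ {ω | ∀ i, X i ω + Y ⟨0, hk⟩ ω ≤ x} := by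
  haveI : Nonempty (Fin k) := ⟨⟨0, hk⟩⟩
  set V : Ω → (Fin k → ℝ) := fun ω i => X i ω with hVdef
  set W : Ω → (Fin k → ℝ) := fun ω i => Y i ω with hWdef
  have hVm : Measurable V := measurable_pi_lambda _ hX
  have hWm : Measurable W := measurable_pi_lambda _ hY
  set ν := Measure.map V μ with hν
  set ρ := Measure.map W μ with hρ
  haveI : IsProbabilityMeasure ν := Measure.isProbabilityMeasure_map hVm.aemeasurable
  haveI : IsProbabilityMeasure ρ := Measure.isProbabilityMeasure_map hWm.aemeasurable
  have hmap : Measure.map (fun ω => (V ω, W ω)) μ = ν.prod ρ :=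
    (indepFun_iff_map_prod_eq_prod_map_map hVm.aemeasurable hWm.aemeasurable).mp hindep
  -- key fact: ρ {w | w j ≤ c} = ρ {w | w ⟨0,hk⟩ ≤ c}
  have key : ∀ (j : Fin k) (c : ℝ), ρ {w | w j ≤ c} = ρ {w | w ⟨0, hk⟩ ≤ c} := by
    intro j c
    have h1 : ∀ (i : Fin k), ρ {w | w i ≤ c} = (Measure.map (Y i) μ) (Set.Iic c) := by
      intro i
      rw [hρ, Measure.map_apply hWm (measurableSet_le (measurable_pi_apply i) measurable_const),
        Measure.map_apply (hY i) measurableSet_Iic]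
      rfl
    rw [h1 j, h1 ⟨0, hk⟩, hid j]
  have hs1 : MeasurableSet {p : (Fin k → ℝ) × (Fin k → ℝ) | ∀ i, p.1 i + p.2 i ≤ x} := by
    have : {p : (Fin k → ℝ) × (Fin k → ℝ) | ∀ i, p.1 i + p.2 i ≤ x}
        = ⋂ i, {p : (Fin k → ℝ) × (Fin k → ℝ) | p.1 i + p.2 i ≤ x} := by ext p; simp
    rw [this]
    exact MeasurableSet.iInter fun i => measurableSet_le (by fun_prop) measurable_const
  have hs2 : MeasurableSet {p : (Fin k → ℝ) × (Fin k → ℝ) | ∀ i, p.1 i + p.2 ⟨0, hk⟩ ≤ x} := by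
    have : {p : (Fin k → ℝ) × (Fin k → ℝ) | ∀ i, p.1 i + p.2 ⟨0, hk⟩ ≤ x}
        = ⋂ i, {p : (Fin k → ℝ) × (Fin k → ℝ) | p.1 i + p.2 ⟨0, hk⟩ ≤ x} := by ext p; simp
    rw [this]
    exact MeasurableSet.iInter fun i => measurableSet_le (by fun_prop) measurable_const
  have e1 : μ {ω | ∀ i, X i ω + Y i ω ≤ x}
      = ∫⁻ v, ρ {w | ∀ i, v i + w i ≤ x} ∂ν := by
    have : μ {ω | ∀ i, X i ω + Y i ω ≤ x}
        = Measure.map (fun ω => (V ω, W ω)) μ {p | ∀ i, p.1 i + p.2 i ≤ x} := by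
      rw [Measure.map_apply (hVm.prodMk hWm) hs1]; rfl
    rw [this, hmap, Measure.prod_apply hs1]
    rfl
  have e2 : μ {ω | ∀ i, X i ω + Y ⟨0, hk⟩ ω ≤ x}
      = ∫⁻ v, ρ {w | ∀ i, v i + w ⟨0, hk⟩ ≤ x} ∂ν := by
    have : μ {ω | ∀ i, X i ω + Y ⟨0, hk⟩ ω ≤ x}
        = Measure.map (fun ω => (V ω, W ω)) μ {p | ∀ i, p.1 i + p.2 ⟨0, hk⟩ ≤ x} := by
      rw [Measure.map_apply (hVm.prodMk hWm) hs2]; rfl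
    rw [this, hmap, Measure.prod_apply hs2]
    rfl
  rw [e1, e2]
  refine lintegral_mono fun v => ?_
  obtain ⟨j, hj⟩ := Finite.exists_max v
  calc ρ {w | ∀ i, v i + w i ≤ x} ≤ ρ {w | w j ≤ x - v j} := by
        apply measure_mono
        intro w hw
        have := hw j
        simpa [le_sub_iff_add_le, add_comm] using this
    _ = ρ {w | w ⟨0, hk⟩ ≤ x - v j} := key j _
    _ = ρ {w | ∀ i, v i + w ⟨0, hk⟩ ≤ x} := by
        congr 1
        ext w
        constructor
        · intro hw i
          simp only [Set.mem_setOf_eq] at hw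
          have : v i + w ⟨0, hk⟩ ≤ v j + w ⟨0, hk⟩ := add_le_add_left (hj i) _
          linarith
        · intro hw
          have := hw j
          simp only [Set.mem_setOf_eq] at *
          linarith
end

section
/- Let X be a real random variable with Cramér rate function I(x) = sup_{λ∈ℝ} (λx - log E[e^{λX}]). If there exists x ∈ ℝ with I(x) < ∞ and I(x+ε) = ∞ for all ε > 0, then P(X > x) = 0. -/
open MeasureTheory

/-- The Cramér rate function (Legendre transform of the log moment generating
function), valued in `EReal` so that it may be infinite. -/
noncomputable def cramerRate {Ω : Type*} [MeasurableSpace Ω] (μ : Measure Ω)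
    (X : Ω → ℝ) (x : ℝ) : EReal :=
  ⨆ l : ℝ, ((l * x : ℝ) : EReal) -
    ENNReal.log (∫⁻ ω, ENNReal.ofReal (Real.exp (l * X ω)) ∂μ)

theorem stmt6 {Ω : Type*} [MeasurableSpace Ω] (μ : Measure Ω) [IsProbabilityMeasure μ]
    (X : Ω → ℝ) (hX : Measurable X) (x : ℝ)
    (hfin : cramerRate μ X x ≠ ⊤)
    (hinf : ∀ ε : ℝ, 0 < ε → cramerRate μ X (x + ε) = ⊤) :
    μ {ω | x < X ω} = 0 := by
  by_contra h
  -- find δ > 0 with μ {X ≥ x + δ} ≠ 0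
  have hsub : {ω | x < X ω} ⊆ ⋃ n : ℕ, {ω | x + 1/(n+1) ≤ X ω} := by
    intro ω hω
    obtain ⟨n, hn⟩ := exists_nat_one_div_lt (K := ℝ) (sub_pos.2 hω)
    exact Set.mem_iUnion.2 ⟨n, by simp only [Set.mem_setOf_eq]; linarith⟩
  have hex : ∃ n : ℕ, μ {ω | x + 1/(n+1) ≤ X ω} ≠ 0 := by
    by_contra hall
    push_neg at hall
    exact h (measure_mono_null hsub (measure_iUnion_null hall))
  obtain ⟨n, hn⟩ := hex
  set δ : ℝ := 1/(n+1) with hδdef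
  have hδ : 0 < δ := by positivity
  set A : Set Ω := {ω | x + δ ≤ X ω} with hAdef
  have hA : MeasurableSet A := hX measurableSet_Ici
  have hAfin : μ A ≠ ⊤ := (measure_lt_top μ A).ne
  -- log of μ A is a real number
  obtain ⟨cr, hcr⟩ : ∃ cr : ℝ, ENNReal.log (μ A) = (cr : EReal) := by
    have h1 : ENNReal.log (μ A) ≠ ⊥ := by simp [hn]
    have h2 : ENNReal.log (μ A) ≠ ⊤ := by simp [hAfin]
    exact ⟨(ENNReal.log (μ A)).toReal, (EReal.coe_toReal h2 h1).symm⟩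
  set ε : ℝ := δ/2 with hεdef
  have hε : 0 < ε := by positivity
  have hcontra : cramerRate μ X (x + ε) ≤ max (cramerRate μ X x) ((-cr : ℝ) : EReal) := by
    refine iSup_le fun l => ?_
    set J : ENNReal := ∫⁻ ω, ENNReal.ofReal (Real.exp (l * X ω)) ∂μ with hJdef
    have hJpos : 0 < J := by
      rw [hJdef, lintegral_pos_iff_support (by fun_prop)]
      have : Function.support (fun ω => ENNReal.ofReal (Real.exp (l * X ω))) = Set.univ := by
        ext ω; simp [Function.support, (Real.exp_pos _)]
      simp [this]
    have hLbot : ENNReal.log J ≠ ⊥ := by simp [hJpos.ne']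
    rcases le_or_gt 0 l with hl | hl
    · -- l ≥ 0 : use the lower bound on the mgf
      have hJge : ENNReal.ofReal (Real.exp (l * (x + δ))) * μ A ≤ J := by
        rw [hJdef, ← lintegral_indicator_const hA]
        refine lintegral_mono fun ω => ?_
        by_cases hω : ω ∈ A
        · rw [Set.indicator_of_mem hω]
          exact ENNReal.ofReal_le_ofReal (Real.exp_le_exp.2 (mul_le_mul_of_nonneg_left hω hl))
        · simp [Set.indicator_of_notMem hω]
      have hlog : ((l * (x + δ) + cr : ℝ) : EReal) ≤ ENNReal.log J := by
        calc ((l * (x + δ) + cr : ℝ) : EReal)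
            = ENNReal.log (ENNReal.ofReal (Real.exp (l * (x + δ))) * μ A) := by
              rw [ENNReal.log_mul_add, ENNReal.log_ofReal_of_pos (Real.exp_pos _),
                Real.log_exp, hcr, EReal.coe_add]
          _ ≤ ENNReal.log J := ENNReal.log_monotone hJge
      refine le_trans (le_trans (EReal.sub_le_sub le_rfl hlog) ?_) (le_max_right _ _)
      rw [← EReal.coe_sub, EReal.coe_le_coe_iff]
      have : 0 ≤ l * ε := mul_nonneg hl hε.le
      have : l * (x + ε) - (l * (x + δ) + cr) = -(l * (δ - ε)) - cr := by ring
      rw [this]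
      have hδε : 0 ≤ l * (δ - ε) := mul_nonneg hl (by rw [hεdef]; linarith)
      linarith
    · -- l < 0 : use finiteness at x
      have hkey : ((l * x : ℝ) : EReal) - ENNReal.log J ≤ cramerRate μ X x :=
        le_iSup (fun l : ℝ => ((l * x : ℝ) : EReal) -
          ENNReal.log (∫⁻ ω, ENNReal.ofReal (Real.exp (l * X ω)) ∂μ)) l
      by_cases hLtop : ENNReal.log J = ⊤
      · simp [hLtop]
      · obtain ⟨r, hr⟩ : ∃ r : ℝ, ENNReal.log J = (r : EReal) :=
          ⟨(ENNReal.log J).toReal, (EReal.coe_toReal hLtop hLbot).symm⟩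
        rw [hr] at hkey ⊢
        refine le_trans (le_trans ?_ hkey) (le_max_left _ _)
        rw [← EReal.coe_sub, ← EReal.coe_sub, EReal.coe_le_coe_iff]
        have hle : l * ε ≤ 0 := mul_nonpos_of_nonpos_of_nonneg hl.le hε.le
        nlinarith [hle]
  rw [hinf ε hε, top_le_iff] at hcontra
  rcases max_eq_iff.1 hcontra with ⟨h1, _⟩ | ⟨h1, _⟩
  · exact hfin h1
  · exact EReal.coe_ne_top _ h1
end

section
/- Let X be a real random variable with Cramér rate function I(x) = sup_{λ∈ℝ} (λx - log E[e^{λX}]). If x ∈ ℝ satisfies I(x) < ∞ and I(x+ε) = ∞ for all ε > 0, then P(X = x) = e^{-I(x)}. -/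
open MeasureTheory
open scoped ENNReal NNReal

namespace Stmt7Aux

variable {Ω : Type*} [MeasurableSpace Ω] {μ : Measure Ω} {X : Ω → ℝ}

noncomputable def M (μ : Measure Ω) (X : Ω → ℝ) (l : ℝ) : ℝ≥0∞ :=
  ∫⁻ ω, ENNReal.ofReal (Real.exp (l * X ω)) ∂μ

lemma meas (hX : Measurable X) (l : ℝ) :
    Measurable fun ω => ENNReal.ofReal (Real.exp (l * X ω)) :=
  ENNReal.measurable_ofReal.comp (Real.measurable_exp.comp (hX.const_mul l))

lemma M_zero [IsProbabilityMeasure μ] : M μ X 0 = 1 := by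
  simp [M]

lemma M_pos [IsProbabilityMeasure μ] (hX : Measurable X) (l : ℝ) : 0 < M μ X l := by
  rw [M, lintegral_pos_iff_support (meas hX l)]
  have : Function.support (fun ω => ENNReal.ofReal (Real.exp (l * X ω))) = Set.univ := by
    ext ω
    simp only [Function.support, Set.mem_setOf_eq, ne_eq, ENNReal.ofReal_eq_zero, not_le,
      Real.exp_pos, Set.setOf_true]
  rw [this]
  simp

lemma M_lower (hX : Measurable X) {l c : ℝ} {s : Set Ω} (hs : MeasurableSet s)
    (hc : ∀ ω ∈ s, c ≤ l * X ω) :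
    ENNReal.ofReal (Real.exp c) * μ s ≤ M μ X l := by
  calc ENNReal.ofReal (Real.exp c) * μ s
      = ∫⁻ _ω in s, ENNReal.ofReal (Real.exp c) ∂μ := by
        rw [setLIntegral_const]
    _ ≤ ∫⁻ ω in s, ENNReal.ofReal (Real.exp (l * X ω)) ∂μ := by
        refine setLIntegral_mono (meas hX l) fun ω hω => ?_
        exact ENNReal.ofReal_le_ofReal (Real.exp_le_exp.2 (hc ω hω))
    _ ≤ M μ X l := setLIntegral_le_lintegral _ _

lemma log_M_lower (hX : Measurable X) {l c : ℝ} {s : Set Ω} (hs : MeasurableSet s)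
    (hc : ∀ ω ∈ s, c ≤ l * X ω) :
    (c : EReal) + ENNReal.log (μ s) ≤ ENNReal.log (M μ X l) := by
  have := ENNReal.log_monotone (M_lower (μ := μ) hX hs hc)
  rwa [ENNReal.log_mul_add, ENNReal.log_ofReal_of_pos (Real.exp_pos c), Real.log_exp] at this

lemma sub_le_coe {a d : ℝ} {b : EReal} (hd : (d : EReal) ≤ b) :
    (a : EReal) - b ≤ ((a - d : ℝ) : EReal) := by
  rw [EReal.coe_sub]
  exact EReal.sub_le_sub le_rfl hd



lemma cramerRate_eq (μ : Measure Ω) (X : Ω → ℝ) (x : ℝ) :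
    cramerRate μ X x = ⨆ l : ℝ, ((l * x : ℝ) : EReal) - ENNReal.log (M μ X l) := rfl

lemma log_meas_real [IsProbabilityMeasure μ] {s : Set Ω} (h : μ s ≠ 0) :
    ENNReal.log (μ s) = ((ENNReal.log (μ s)).toReal : EReal) := by
  refine (EReal.coe_toReal ?_ ?_).symm
  · simp [(measure_lt_top μ s).ne]
  · simp [h]

lemma cramer_nonneg [IsProbabilityMeasure μ] (x : ℝ) : (0 : EReal) ≤ cramerRate μ X x := by
  rw [cramerRate_eq]
  have h := le_iSup (fun l : ℝ => ((l * x : ℝ) : EReal) - ENNReal.log (M μ X l)) 0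
  simpa [M_zero] using h

lemma no_gt [IsProbabilityMeasure μ] (hX : Measurable X) {x : ℝ}
    (hfin : cramerRate μ X x ≠ ⊤)
    (hinf : ∀ ε : ℝ, 0 < ε → cramerRate μ X (x + ε) = ⊤) :
    μ {ω | x < X ω} = 0 := by
  by_contra h
  have hU : {ω | x < X ω} ⊆ ⋃ n : ℕ, {ω | x + 1/((n : ℝ)+1) ≤ X ω} := by
    intro ω hω
    obtain ⟨n, hn⟩ := exists_nat_one_div_lt (K := ℝ) (sub_pos.2 (hω : x < X ω))
    exact Set.mem_iUnion.2 ⟨n, by simp only [Set.mem_setOf_eq]; linarith⟩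
  obtain ⟨n, hn⟩ : ∃ n : ℕ, μ {ω | x + 1/((n : ℝ)+1) ≤ X ω} ≠ 0 := by
    by_contra hall
    push_neg at hall
    exact h (measure_mono_null hU (measure_iUnion_null hall))
  set δ : ℝ := 1/((n : ℝ)+1) with hδdef
  have hδ : 0 < δ := by positivity
  set s : Set Ω := {ω | x + δ ≤ X ω} with hsdef
  have hs : MeasurableSet s := hX measurableSet_Ici
  set r : ℝ := (ENNReal.log (μ s)).toReal with hrdef
  have hr : ENNReal.log (μ s) = (r : EReal) := log_meas_real hn
  have h0 : cramerRate μ X x ≠ ⊥ := ne_bot_of_le_ne_bot (by simp) (cramer_nonneg x)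
  set C : ℝ := (cramerRate μ X x).toReal with hCdef
  have hC : cramerRate μ X x = (C : EReal) := (EReal.coe_toReal hfin h0).symm
  set B : ℝ := max C (-r) with hBdef
  have hbound : cramerRate μ X (x + δ/2) ≤ (B : EReal) := by
    rw [cramerRate_eq]
    refine iSup_le fun l => ?_
    rcases le_total 0 l with hl | hl
    · have hlog := log_M_lower (μ := μ) hX hs
        (c := l * (x + δ)) (fun ω hω => mul_le_mul_of_nonneg_left hω hl)
      rw [hr, ← EReal.coe_add] at hlog
      refine le_trans (sub_le_coe hlog) ?_
      rw [EReal.coe_le_coe_iff]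
      have : l * (x + δ/2) - (l * (x + δ) + r) = -(l * (δ/2)) - r := by ring
      rw [this]
      have : -(l * (δ/2)) ≤ 0 := by nlinarith
      calc -(l * (δ/2)) - r ≤ -r := by linarith
        _ ≤ B := le_max_right _ _
    · by_cases hM : M μ X l = ⊤
      · rw [hM]
        simp only [ENNReal.log_top]
        rw [EReal.sub_top]
        exact bot_le
      · have hb1 : ENNReal.log (M μ X l) ≠ ⊤ := by simp [hM]
        have hb2 : ENNReal.log (M μ X l) ≠ ⊥ := by simp [(M_pos hX l).ne']
        set m : ℝ := (ENNReal.log (M μ X l)).toReal with hmdef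
        have hm : ENNReal.log (M μ X l) = (m : EReal) := (EReal.coe_toReal hb1 hb2).symm
        have h1 : ((l * x : ℝ) : EReal) - ENNReal.log (M μ X l) ≤ (C : EReal) := by
          rw [← hC, cramerRate_eq]
          exact le_iSup (fun l : ℝ => ((l * x : ℝ) : EReal) - ENNReal.log (M μ X l)) l
        rw [hm, ← EReal.coe_sub, EReal.coe_le_coe_iff] at h1
        rw [hm, ← EReal.coe_sub, EReal.coe_le_coe_iff]
        have : l * (x + δ/2) - m ≤ l * x - m := by nlinarith
        calc l * (x + δ/2) - m ≤ C := by linarith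
          _ ≤ B := le_max_left _ _
  rw [hinf (δ/2) (by positivity)] at hbound
  exact (EReal.coe_lt_top B).not_ge hbound


lemma A_eq (hX : Measurable X) (l x : ℝ) :
    ∫⁻ ω, ENNReal.ofReal (Real.exp (l * (X ω - x))) ∂μ
      = M μ X l * ENNReal.ofReal (Real.exp (-(l * x))) := by
  have h : ∀ ω, Real.exp (l * (X ω - x)) = Real.exp (l * X ω) * Real.exp (-(l * x)) := by
    intro ω
    rw [← Real.exp_add]
    ring_nf
  simp_rw [h, ENNReal.ofReal_mul (Real.exp_pos _).le]
  exact lintegral_mul_const _ (meas hX l)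

lemma term_eq [IsProbabilityMeasure μ] (hX : Measurable X) (l x : ℝ) :
    ((l * x : ℝ) : EReal) - ENNReal.log (M μ X l)
      = - ENNReal.log (∫⁻ ω, ENNReal.ofReal (Real.exp (l * (X ω - x))) ∂μ) := by
  rw [A_eq hX, ENNReal.log_mul_add, ENNReal.log_ofReal_of_pos (Real.exp_pos _), Real.log_exp]
  have hb2 : ENNReal.log (M μ X l) ≠ ⊥ := by simp [(M_pos hX l).ne']
  by_cases hM : M μ X l = ⊤
  · rw [hM]
    simp only [ENNReal.log_top, EReal.sub_top]
    rw [EReal.top_add_coe]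
    rfl
  · have hb1 : ENNReal.log (M μ X l) ≠ ⊤ := by simp [hM]
    have hm : ENNReal.log (M μ X l) = (((ENNReal.log (M μ X l)).toReal : ℝ) : EReal) :=
      (EReal.coe_toReal hb1 hb2).symm
    rw [hm, ← EReal.coe_sub, ← EReal.coe_add, ← EReal.coe_neg, EReal.coe_eq_coe_iff]
    ring

lemma tendsto_A [IsProbabilityMeasure μ] (hX : Measurable X) {x : ℝ}
    (hle : ∀ᵐ ω ∂μ, X ω ≤ x) :
    Filter.Tendsto (fun n : ℕ => ∫⁻ ω, ENNReal.ofReal (Real.exp ((n : ℝ) * (X ω - x))) ∂μ)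
      Filter.atTop (nhds (μ {ω | X ω = x})) := by
  have hmeas : MeasurableSet {ω | X ω = x} := hX (measurableSet_singleton x)
  have hint : μ {ω | X ω = x}
      = ∫⁻ ω, Set.indicator {ω | X ω = x} (fun _ => (1 : ℝ≥0∞)) ω ∂μ := by
    rw [lintegral_indicator hmeas, setLIntegral_one]
  rw [hint]
  refine tendsto_lintegral_of_dominated_convergence (fun _ => (1 : ℝ≥0∞))
    (fun n => ENNReal.measurable_ofReal.comp
      (Real.measurable_exp.comp ((hX.sub_const x).const_mul _))) (fun n => ?_) (by simp) ?_
  · filter_upwards [hle] with ω hω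
    exact ENNReal.ofReal_le_one.2 (Real.exp_le_one_iff.2 (mul_nonpos_of_nonneg_of_nonpos
      (Nat.cast_nonneg n) (by linarith)))
  · filter_upwards [hle] with ω hω
    rcases eq_or_lt_of_le hω with heq | hlt
    · have : ω ∈ {ω | X ω = x} := heq
      simp only [Set.indicator_of_mem this, heq, sub_self, mul_zero, Real.exp_zero,
        ENNReal.ofReal_one]
      exact tendsto_const_nhds
    · have hmem : ω ∉ {ω | X ω = x} := fun hc => absurd (hc : X ω = x) hlt.ne
      rw [Set.indicator_of_notMem hmem]
      have h1 : Filter.Tendsto (fun n : ℕ => (n : ℝ) * (X ω - x)) Filter.atTop Filter.atBot :=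
        Filter.Tendsto.atTop_mul_const_of_neg (by linarith) tendsto_natCast_atTop_atTop
      have h2 := Real.tendsto_exp_atBot.comp h1
      have h3 := (ENNReal.continuous_ofReal.tendsto 0).comp h2
      simpa [Function.comp_def] using h3

lemma lower [IsProbabilityMeasure μ] (hX : Measurable X) {x : ℝ}
    (hle : ∀ᵐ ω ∂μ, X ω ≤ x) :
    - ENNReal.log (μ {ω | X ω = x}) ≤ cramerRate μ X x := by
  have ht := tendsto_A hX hle
  have ht2 : Filter.Tendsto
      (fun n : ℕ => - ENNReal.log (∫⁻ ω, ENNReal.ofReal (Real.exp ((n : ℝ) * (X ω - x))) ∂μ))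
      Filter.atTop (nhds (- ENNReal.log (μ {ω | X ω = x}))) :=
    ((ENNReal.continuous_log.tendsto _).comp ht).neg
  refine le_of_tendsto' ht2 fun n => ?_
  rw [← term_eq hX]
  rw [cramerRate_eq]
  exact le_iSup (fun l : ℝ => ((l * x : ℝ) : EReal) - ENNReal.log (M μ X l)) (n : ℝ)

lemma upper [IsProbabilityMeasure μ] (hX : Measurable X) {x : ℝ}
    (hp : μ {ω | X ω = x} ≠ 0) :
    cramerRate μ X x ≤ - ENNReal.log (μ {ω | X ω = x}) := by
  rw [cramerRate_eq]
  refine iSup_le fun l => ?_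
  have hlog := log_M_lower (μ := μ) hX (hX (measurableSet_singleton x))
    (c := l * x) (fun ω hω => by rw [(hω : X ω = x)])
  have hset : X ⁻¹' {x} = {ω | X ω = x} := rfl
  rw [hset] at hlog
  set r : ℝ := (ENNReal.log (μ {ω | X ω = x})).toReal with hrdef
  have hr : ENNReal.log (μ {ω | X ω = x}) = (r : EReal) := log_meas_real hp
  rw [hr, ← EReal.coe_add] at hlog
  refine le_trans (sub_le_coe hlog) ?_
  rw [hr, ← EReal.coe_neg, EReal.coe_le_coe_iff]
  linarith

end Stmt7Aux

theorem stmt7 {Ω : Type*} [MeasurableSpace Ω] (μ : Measure Ω) [IsProbabilityMeasure μ]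
    (X : Ω → ℝ) (hX : Measurable X) (x : ℝ)
    (hfin : cramerRate μ X x ≠ ⊤)
    (hinf : ∀ ε : ℝ, 0 < ε → cramerRate μ X (x + ε) = ⊤) :
    μ {ω | X ω = x} = ENNReal.ofReal (Real.exp (-(cramerRate μ X x).toReal)) := by
  have hgt := Stmt7Aux.no_gt hX hfin hinf
  have hle : ∀ᵐ ω ∂μ, X ω ≤ x := by
    rw [MeasureTheory.ae_iff]
    simpa [not_le] using hgt
  have hlow := Stmt7Aux.lower hX hle
  have hp : μ {ω | X ω = x} ≠ 0 := by
    intro h0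
    rw [h0] at hlow
    simp only [ENNReal.log_zero, EReal.neg_bot, top_le_iff] at hlow
    exact hfin hlow
  have heq : cramerRate μ X x = - ENNReal.log (μ {ω | X ω = x}) :=
    le_antisymm (Stmt7Aux.upper hX hp) hlow
  have hr : ENNReal.log (μ {ω | X ω = x})
      = ((ENNReal.log (μ {ω | X ω = x})).toReal : EReal) := Stmt7Aux.log_meas_real hp
  set r : ℝ := (ENNReal.log (μ {ω | X ω = x})).toReal with hrdef
  have htor : (cramerRate μ X x).toReal = -r := by
    rw [heq, hr, ← EReal.coe_neg, EReal.toReal_coe]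
  rw [htor, neg_neg]
  have hexp := ENNReal.exp_log (μ {ω | X ω = x})
  rw [hr, EReal.exp_coe] at hexp
  exact hexp.symm
end
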